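/- Coverage lemma for the clique part of extend: let cl' and cl₂ be clique sets and G a finite set of variables. If u ∈ ↓cl' and u ∩ G ∈ ↓cl₂, then u ∈ ↓{(C ∩ D) ∪ (C \ G) : C ∈ cl', D ∈ cl₂}. -/
import Mathlib


variable {V : Type*} [DecidableEq V]

/-- `℘⁰(C)`: the set of nonempty subsets of a finite set `C`. -/
def pow0 (C : Finset V) : Set (Finset V) := {u | u ⊆ C ∧ u ≠ ∅}

/-- Concretization of a clique set: `↓cl = ⋃_{C ∈ cl} ℘⁰(C)`. -/
def conc (cl : Set (Finset V)) : Set (Finset V) := ⋃ C ∈ cl, pow0 C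

/-- Binary union: `s₁ ⊎ s₂ = {a ∪ b : a ∈ s₁, b ∈ s₂}`. -/
def bin (s₁ s₂ : Set (Finset V)) : Set (Finset V) :=
  {u | ∃ a ∈ s₁, ∃ b ∈ s₂, u = a ∪ b}

/-- Star union: all unions `⋃ T` over finite nonempty subfamilies `T ⊆ s`. -/
def starU (s : Set (Finset V)) : Set (Finset V) :=
  {u | ∃ T : Finset (Finset V), T.Nonempty ∧ ↑T ⊆ s ∧ u = T.sup id}

/-- `s_G`: the part of `s` relevant to `G` (groups intersecting `G`). -/
def relG (G : Finset V) (s : Set (Finset V)) : Set (Finset V) :=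
  {u ∈ s | u ∩ G ≠ ∅}

/-- `rel̄(S, cl) = {C \ S : C ∈ cl} \ {∅}`. -/
def relbar (S : Finset V) (cl : Set (Finset V)) : Set (Finset V) :=
  {d | (∃ C ∈ cl, d = C \ S) ∧ d ≠ ∅}

/-- `project(G, s) = {u ∩ G : u ∈ s} \ {∅}`. -/
def sproject (G : Finset V) (s : Set (Finset V)) : Set (Finset V) :=
  {d | (∃ u ∈ s, d = u ∩ G) ∧ d ≠ ∅}

/-- Abstract unification of the Sharing domain for `x = t`, `T` the variables of `t`. -/
def amgu (x : V) (T : Finset V) (s : Set (Finset V)) : Set (Finset V) :=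
  (s \ relG ({x} ∪ T) s) ∪ bin (starU (relG {x} s)) (starU (relG T s))

/-- The `extend` function of the Sharing domain. -/
def extendSh (Call : Set (Finset V)) (G : Finset V) (Prime : Set (Finset V)) :
    Set (Finset V) :=
  {u ∈ Call | u ∩ G = ∅} ∪ {u ∈ starU (relG G Call) | u ∩ G ∈ Prime}

/-- Union of all groups of `s` containing `x`, as a set of variables. -/
def occSet (s : Set (Finset V)) (x : V) : Set V :=
  ⋃ u ∈ {u ∈ s | x ∈ u}, (↑u : Set V)

/-- If u ∈ ↓cl' and u ∩ G ∈ ↓cl₂ then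
    u ∈ ↓{(C ∩ D) ∪ (C \ G) : C ∈ cl', D ∈ cl₂}. -/
theorem extcl_cover (cl' cl₂ : Set (Finset V)) (G : Finset V) (u : Finset V)
    (h₁ : u ∈ conc cl') (h₂ : u ∩ G ∈ conc cl₂) :
    u ∈ conc {e | ∃ C ∈ cl', ∃ D ∈ cl₂, e = (C ∩ D) ∪ (C \ G)} := by
  simp only [conc, Set.mem_iUnion, pow0, Set.mem_setOf_eq] at *
  obtain ⟨C, hC, huC, hune⟩ := h₁
  obtain ⟨D, hD, huD, -⟩ := h₂
  refine ⟨(C ∩ D) ∪ (C \ G), ⟨C, hC, D, hD, rfl⟩, ?_, hune⟩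
  intro x hx
  by_cases hxG : x ∈ G
  · exact Finset.mem_union_left _ (Finset.mem_inter.2 ⟨huC hx, huD (Finset.mem_inter.2 ⟨hx, hxG⟩)⟩)
  · exact Finset.mem_union_right _ (Finset.mem_sdiff.2 ⟨huC hx, hxG⟩)
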